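/- Let b ≥ 2 be an integer base. Define the Liouville word a = a_1a_2a_3... by a_n = 1 if n = k! for some positive integer k, and a_n = 0 otherwise. For each i ≥ 1, let n_i = (i+3)! − 1 and let u_{n_i} = ∑_{j=1}^{n_i} a_j b^{n_i−j}. Then b^{(i+3)! − (i+2)! − 1} divides u_{n_i}, and consequently, writing c_i for the largest divisor of u_{n_i} all of whose prime factors divide b, one has c_i/u_{n_i} > b^{−n_i/2} for all i ≥ 1. -/

import Mathlib

open Classical in
theorem stmt_12 (b : ℕ) (hb : 2 ≤ b)
    (a : ℕ → ℕ) (ha : ∀ n, a n = if ∃ k, 0 < k ∧ n = Nat.factorial k then 1 else 0)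
    (n : ℕ → ℕ) (hn : ∀ i, n i = Nat.factorial (i + 3) - 1)
    (u : ℕ → ℕ) (hu : ∀ i, u i = ∑ j ∈ Finset.Icc 1 (n i), a j * b ^ (n i - j)) :
    ∀ i, 1 ≤ i →
      b ^ (Nat.factorial (i + 3) - Nat.factorial (i + 2) - 1) ∣ u i ∧
      ∀ c : ℕ, c ∣ u i → (∀ p, p.Prime → p ∣ c → p ∣ b) →
        (∀ c', c' ∣ u i → (∀ p, p.Prime → p ∣ c' → p ∣ b) → c' ≤ c) →
        (b : ℝ) ^ (-(n i : ℝ) / 2) < (c : ℝ) / (u i : ℝ) := by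
  intro i hi
  set E := Nat.factorial (i + 3) - Nat.factorial (i + 2) - 1 with hE
  have hfact2 : Nat.factorial (i + 2) ≤ Nat.factorial (i + 3) := Nat.factorial_le (by omega)
  have hfactpos : 0 < Nat.factorial (i + 2) := Nat.factorial_pos _
  have hfact6 : 6 ≤ Nat.factorial (i + 2) := by
    calc 6 = Nat.factorial 3 := rfl
    _ ≤ Nat.factorial (i + 2) := Nat.factorial_le (by omega)
  have hfactmul : Nat.factorial (i + 3) = (i + 3) * Nat.factorial (i + 2) := rfl
  have hni : n i = Nat.factorial (i + 3) - 1 := hn i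
  have hni1 : 1 ≤ n i := by omega
  -- divisibility
  have hdvd : b ^ E ∣ u i := by
    rw [hu]
    apply Finset.dvd_sum
    intro j hj
    rw [ha]
    split_ifs with h
    · obtain ⟨k, hk0, rfl⟩ := h
      have hj' : Nat.factorial k ≤ n i := (Finset.mem_Icc.mp hj).2
      have hk : k ≤ i + 2 := by
        by_contra hc
        push_neg at hc
        have h3 : Nat.factorial (i + 3) ≤ Nat.factorial k := Nat.factorial_le (by omega)
        omega
      have hkle : Nat.factorial k ≤ Nat.factorial (i + 2) := Nat.factorial_le hk
      have hEle : E ≤ n i - Nat.factorial k := by omega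
      exact Dvd.dvd.mul_left (pow_dvd_pow b hEle) 1
    · simp
  refine ⟨hdvd, ?_⟩
  intro c hcd hcp hcmax
  -- c ≥ b^E
  have hbE : b ^ E ≤ c := by
    apply hcmax _ hdvd
    intro p hp hpd
    exact hp.dvd_of_dvd_pow hpd
  -- positivity of u
  have hupos : 0 < u i := by
    rw [hu]
    have h1 : (1 : ℕ) ∈ Finset.Icc 1 (n i) := Finset.mem_Icc.mpr ⟨le_refl _, hni1⟩
    have ha1 : a 1 = 1 := by
      rw [ha, if_pos]
      exact ⟨1, one_pos, rfl⟩
    have hle := Finset.single_le_sum (f := fun j => a j * b ^ (n i - j))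
      (fun j _ => Nat.zero_le _) h1
    simp only [ha1, one_mul] at hle
    exact lt_of_lt_of_le (by positivity) hle
  -- upper bound u < b^n
  have hub : u i < b ^ (n i) := by
    rw [hu]
    calc ∑ j ∈ Finset.Icc 1 (n i), a j * b ^ (n i - j)
        ≤ ∑ j ∈ Finset.Icc 1 (n i), b ^ (n i - j) := by
          apply Finset.sum_le_sum
          intro j hj
          have : a j ≤ 1 := by rw [ha]; split_ifs <;> simp
          nlinarith [pow_pos (by omega : 0 < b) (n i - j)]
    _ = ∑ k ∈ Finset.range (n i), b ^ k := by
          apply Finset.sum_nbij' (fun j => n i - j) (fun k => n i - k)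
          · intro j hj
            simp only [Finset.mem_Icc] at hj
            simp only [Finset.mem_range]
            omega
          · intro k hk
            simp only [Finset.mem_range] at hk
            simp only [Finset.mem_Icc]
            omega
          · intro j hj
            simp only [Finset.mem_Icc] at hj
            omega
          · intro k hk
            simp only [Finset.mem_range] at hk
            omega
          · intro j hj
            rfl
    _ < b ^ (n i) := Nat.geomSum_lt hb (fun k hk => Finset.mem_range.mp hk)
  -- key nat inequality : n i ≤ 2 * E
  have hkey : n i ≤ 2 * E := by
    have : 4 * Nat.factorial (i + 2) ≤ Nat.factorial (i + 3) := by
      rw [hfactmul]; nlinarith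
    omega
  -- real part
  have hb1 : (1 : ℝ) < (b : ℝ) := by exact_mod_cast by omega
  have hb0 : (0 : ℝ) < (b : ℝ) := by linarith
  have hupos' : (0 : ℝ) < (u i : ℝ) := by exact_mod_cast hupos
  have hbEpos : (0 : ℝ) < (b : ℝ) ^ E := by positivity
  have step1 : (b : ℝ) ^ (-(n i : ℝ) / 2) ≤ (b : ℝ) ^ ((E : ℝ) - (n i : ℝ)) := by
    apply Real.rpow_le_rpow_left_iff hb1 |>.mpr
    have : (n i : ℝ) ≤ 2 * (E : ℝ) := by exact_mod_cast hkey
    linarith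
  have step2 : (b : ℝ) ^ ((E : ℝ) - (n i : ℝ)) = (b : ℝ) ^ E / (b : ℝ) ^ (n i) := by
    rw [Real.rpow_sub hb0, Real.rpow_natCast, Real.rpow_natCast]
  have step3 : (b : ℝ) ^ E / (b : ℝ) ^ (n i) < (b : ℝ) ^ E / (u i : ℝ) := by
    apply div_lt_div_of_pos_left hbEpos hupos'
    exact_mod_cast hub
  have step4 : (b : ℝ) ^ E / (u i : ℝ) ≤ (c : ℝ) / (u i : ℝ) := by
    gcongr
    exact_mod_cast hbE
  calc (b : ℝ) ^ (-(n i : ℝ) / 2) ≤ (b : ℝ) ^ ((E : ℝ) - (n i : ℝ)) := step1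
  _ = (b : ℝ) ^ E / (b : ℝ) ^ (n i) := step2
  _ < (b : ℝ) ^ E / (u i : ℝ) := step3
  _ ≤ (c : ℝ) / (u i : ℝ) := step4
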